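/- Let P be a finite graded poset with an ER-labeling λ. Then for each k, |w_k(P)| equals the number of ascent-free saturated chains of length k in P starting at 0̂, and W_k(P) equals the number of strictly increasing saturated chains of length k starting at 0̂. -/

import Mathlib

attribute [local instance] Classical.propDecidable

/-- The Möbius function of a finite poset (preorder suffices for the recursion),
defined by `μ x x = 1` and `μ x y = -∑_{x ≤ z < y} μ x z`. -/
noncomputable def mobius {P : Type} [Preorder P] [Fintype P] (x : P) : P → ℤ
  | y =>
    if x = y then 1
    else -∑ z ∈ (Finset.univ.filter fun z : P => x ≤ z ∧ z < y).attach, mobius x z.1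
termination_by y => (Finset.univ.filter fun z : P => z < y).card
decreasing_by
  have hz := z.2
  simp only [Finset.mem_filter] at hz
  refine Finset.card_lt_card ((Finset.ssubset_iff_of_subset fun w hw => ?_).mpr ⟨z.1, ?_, ?_⟩)
  · simp only [Finset.mem_filter] at hw ⊢
    exact ⟨hw.1, hw.2.trans hz.2.2⟩
  · simp only [Finset.mem_filter]
    exact ⟨Finset.mem_univ _, hz.2.2⟩
  · simp only [Finset.mem_filter, not_and]
    exact fun _ => lt_irrefl _

/-- The `k`-th Whitney number of the first kind of a finite graded poset with
minimum `b` and rank function `ρ`: `w_k = ∑_{ρ x = k} μ(b, x)`. -/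
noncomputable def whitney1 {P : Type} [Preorder P] [Fintype P] (ρ : P → ℕ) (b : P) (k : ℕ) : ℤ :=
  ∑ x ∈ Finset.univ.filter fun x : P => ρ x = k, mobius b x

/-- The `k`-th Whitney number of the second kind: the number of elements of rank `k`. -/
noncomputable def whitney2 {P : Type} [Preorder P] [Fintype P] (ρ : P → ℕ) (k : ℕ) : ℕ :=
  (Finset.univ.filter fun x : P => ρ x = k).card
/-- A saturated chain in a poset: a nonempty list of elements in which each
consecutive pair is a covering relation. -/
def IsSatChain {P : Type} [PartialOrder P] (l : List P) : Prop :=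
  l ≠ [] ∧ l.Chain' (· ⋖ ·)

/-- A saturated (maximal) chain of the closed interval `[x, y]`: a saturated chain
starting at `x` and ending at `y`. -/
def SatChainIn {P : Type} [PartialOrder P] (x y : P) (l : List P) : Prop :=
  IsSatChain l ∧ l.head? = some x ∧ l.getLast? = some y

/-- The word of labels of a chain `x₀ ⋖ x₁ ⋖ ⋯ ⋖ x_ℓ` under the edge labeling `lab`,
namely `lab x₀ x₁, lab x₁ x₂, …, lab x_{ℓ-1} x_ℓ`. -/
def labelWord {P Λ : Type} (lab : P → P → Λ) (l : List P) : List Λ :=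
  (l.zip l.tail).map fun q => lab q.1 q.2

/-- A word of labels is (strictly) increasing. -/
def IsIncreasing {Λ : Type} [Preorder Λ] (w : List Λ) : Prop := w.Chain' (· < ·)

/-- A word of labels is ascent-free: no two consecutive labels strictly increase. -/
def IsAscentFree {Λ : Type} [Preorder Λ] (w : List Λ) : Prop :=
  w.Chain' fun a b => ¬ a < b

/-- An ER-labeling: every closed interval `[x,y]` has a unique increasing maximal chain. -/
def IsER {P Λ : Type} [PartialOrder P] [Preorder Λ] (lab : P → P → Λ) : Prop :=
  ∀ x y : P, x ≤ y → ∃! l : List P, SatChainIn x y l ∧ IsIncreasing (labelWord lab l)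

/-- An ER*-labeling: every closed interval `[x,y]` has a unique ascent-free maximal chain. -/
def IsERStar {P Λ : Type} [PartialOrder P] [Preorder Λ] (lab : P → P → Λ) : Prop :=
  ∀ x y : P, x ≤ y → ∃! l : List P, SatChainIn x y l ∧ IsAscentFree (labelWord lab l)

/-- The chain `l` has an ascent at rank `i ≥ 1`: the `(i-1)`-st and `i`-th entries of its
label word (0-indexed), i.e. the labels of the covers at ranks `i` and `i+1`,
strictly increase. -/
def HasAscentAt {P Λ : Type} [PartialOrder P] [Preorder Λ] (lab : P → P → Λ)
    (l : List P) (i : ℕ) : Prop :=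
  IsSatChain l ∧ 1 ≤ i ∧
    ∃ a b, (labelWord lab l)[i-1]? = some a ∧ (labelWord lab l)[i]? = some b ∧ a < b

/-- `l'` is obtained from `l` by a quadratic exchange at rank `i`: it is a saturated
chain agreeing with `l` everywhere except (possibly) at position `i`, and its label
word is that of `l` with the labels at positions `i-1` and `i` interchanged. -/
def IsSwapAt {P Λ : Type} [PartialOrder P] [Preorder Λ] (lab : P → P → Λ)
    (l : List P) (i : ℕ) (l' : List P) : Prop :=
  IsSatChain l' ∧ l'.length = l.length ∧ (∀ m : ℕ, m ≠ i → l'[m]? = l[m]?) ∧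
    ∃ a b, (labelWord lab l)[i-1]? = some a ∧ (labelWord lab l)[i]? = some b ∧
      labelWord lab l' = ((labelWord lab l).set (i-1) b).set i a

/-- The rank two switching property: every saturated chain with an ascent at rank `i`
admits a unique chain, differing from it only at rank `i`, whose labels at the two
corresponding positions are interchanged and whose other labels agree. -/
def RankTwoSwitch {P Λ : Type} [PartialOrder P] [Preorder Λ] (lab : P → P → Λ) : Prop :=
  ∀ l : List P, ∀ i : ℕ, HasAscentAt lab l i → ∃! l' : List P, IsSwapAt lab l i l'

/-- The quadratic exchange operator `U_i` at rank `i`: performs the quadratic exchange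
at rank `i` if the chain has an ascent there, and is the identity otherwise. -/
noncomputable def Uop {P Λ : Type} [PartialOrder P] [Preorder Λ] {lab : P → P → Λ}
    (hR : RankTwoSwitch lab) (i : ℕ) (l : List P) : List P :=
  if h : HasAscentAt lab l i then (hR l i h).exists.choose else l

/-- One-step quadratic exchange relation on saturated chains. -/
def QExStep {P Λ : Type} [PartialOrder P] [Preorder Λ] (lab : P → P → Λ)
    (l l' : List P) : Prop :=
  ∃ i : ℕ, HasAscentAt lab l i ∧ IsSwapAt lab l i l'

/-- Two saturated chains are equivalent if they are connected by quadratic exchanges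
(i.e., lie in the same connected component of the exchange graph). -/
def ChainEquiv {P Λ : Type} [PartialOrder P] [Preorder Λ] (lab : P → P → Λ)
    (l l' : List P) : Prop :=
  Relation.EqvGen (QExStep lab) l l'

/-- The chain `l` has a double ascent (critical condition) at rank `i`. -/
def DoubleAscentAt {P Λ : Type} [PartialOrder P] [Preorder Λ] (lab : P → P → Λ)
    (l : List P) (i : ℕ) : Prop :=
  HasAscentAt lab l i ∧ HasAscentAt lab l (i+1)

/-- The braid relation for the quadratic exchange operators: on any saturated chain with
a double ascent at rank `i`, `U_i U_{i+1} U_i = U_{i+1} U_i U_{i+1}`. -/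
def BraidRel {P Λ : Type} [PartialOrder P] [Preorder Λ] {lab : P → P → Λ}
    (hR : RankTwoSwitch lab) : Prop :=
  ∀ (l : List P) (i : ℕ), DoubleAscentAt lab l i →
    Uop hR i (Uop hR (i+1) (Uop hR i l)) = Uop hR (i+1) (Uop hR i (Uop hR (i+1) l))

/-- The cancellative property: if `c` is a saturated chain of `[z,x]` and `c₁, c₂` are
saturated chains of `[x,y]` with `c ∪ c₁` and `c ∪ c₂` related by quadratic exchanges,
then `c₁` and `c₂` are related by quadratic exchanges. -/
def Cancellative {P Λ : Type} [PartialOrder P] [Preorder Λ] (lab : P → P → Λ) : Prop :=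
  ∀ (z x y : P) (c c₁ c₂ : List P), SatChainIn z x c → SatChainIn x y c₁ →
    SatChainIn x y c₂ → ChainEquiv lab (c ++ c₁.tail) (c ++ c₂.tail) →
      ChainEquiv lab c₁ c₂


section WordLemmas
variable {α : Type*} {r : α → α → Prop}

lemma chain'_getElem {w : List α} :
    w.Chain' r ↔ ∀ (m : ℕ) (h : m + 1 < w.length), r (w[m]'(by omega)) (w[m+1]'h) := by
  exact List.isChain_iff_getElem

lemma chain'_take_iff {w : List α} {i : ℕ} :
    (w.take i).Chain' r ↔ ∀ (m : ℕ) (_ : m + 1 < i) (h2 : m + 1 < w.length),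
      r (w[m]'(by omega)) (w[m+1]'h2) := by
  rw [chain'_getElem]
  constructor
  · intro h m h1 h2
    have hm : m + 1 < (w.take i).length := by
      rw [List.length_take]; omega
    simpa [List.getElem_take] using h m hm
  · intro h m hm
    rw [List.length_take] at hm
    have := h m (by omega) (by omega)
    simpa [List.getElem_take] using this

lemma chain'_drop_iff {w : List α} {i : ℕ} :
    (w.drop i).Chain' r ↔ ∀ (m : ℕ) (h : i + m + 1 < w.length),
      r (w[i+m]'(by omega)) (w[i+m+1]'h) := by
  rw [chain'_getElem]
  constructor
  · intro h m hm
    have hm' : m + 1 < (w.drop i).length := by rw [List.length_drop]; omega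
    have := h m hm'
    simpa [List.getElem_drop, Nat.add_assoc] using this
  · intro h m hm
    rw [List.length_drop] at hm
    have := h m (by omega)
    simpa [List.getElem_drop, Nat.add_assoc] using this

lemma chain'_short {l : List α} (h : l.length ≤ 1) : l.Chain' r := by
  match l, h with
  | [], _ => exact List.isChain_nil
  | [a], _ => exact List.isChain_singleton _

end WordLemmas

section Valid
variable {Λ : Type} [PartialOrder Λ]

def ValidW (w : List Λ) (i : ℕ) : Prop :=
  IsAscentFree (w.take i) ∧ IsIncreasing (w.drop i)

lemma validW_succ_of_validW {w : List Λ} {i i' : ℕ} (h : ValidW w i) (h' : ValidW w i')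
    (hii : i < i') (hle : i' ≤ w.length) : i' = i + 1 := by
  by_contra hne
  have h2 : i + 2 ≤ i' := by omega
  have hAF := chain'_take_iff.mp h'.1 i (by omega) (by omega)
  have hInc := chain'_drop_iff.mp h.2 0 (by omega)
  simp only [Nat.add_zero] at hInc
  exact hAF hInc

lemma validW_zero {w : List Λ} (hw : w ≠ []) (h : ValidW w 0) : ValidW w 1 := by
  constructor
  · exact chain'_short (by rw [List.length_take]; omega)
  · have h2 : IsIncreasing w := by simpa [ValidW] using h.2
    have := List.IsChain.tail h2
    rwa [← List.drop_one] at this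

lemma validW_top {w : List Λ} (h : ValidW w w.length) : ValidW w (w.length - 1) := by
  constructor
  · have hAF : IsAscentFree w := by
      have := h.1
      rwa [List.take_length] at this
    exact List.IsChain.take hAF _
  · exact chain'_short (by rw [List.length_drop]; omega)

lemma validW_mid {w : List Λ} {i : ℕ} (h : ValidW w i) (h0 : 0 < i) (hn : i < w.length) :
    ValidW w (i-1) ∨ ValidW w (i+1) := by
  have hi1 : i - 1 + 1 = i := by omega
  by_cases hlt : w[i-1]'(by omega) < w[i]'hn
  · left
    constructor
    · have := List.IsChain.take h.1 (i-1)
      rwa [List.take_take, min_eq_left (by omega : i - 1 ≤ i)] at this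
    · rw [show IsIncreasing (w.drop (i-1)) = (w.drop (i-1)).Chain' (· < ·) from rfl,
        chain'_drop_iff]
      intro m hm
      match m with
      | 0 => simpa [hi1] using hlt
      | (m+1) =>
        have e1 : i - 1 + (m+1) = i + m := by omega
        have e2 : i - 1 + (m+1) + 1 = i + m + 1 := by omega
        have := chain'_drop_iff.mp h.2 m (by omega)
        simp only [e1, e2]
        exact this
  · right
    constructor
    · rw [show IsAscentFree (w.take (i+1)) = (w.take (i+1)).Chain' (fun a b => ¬ a < b) from rfl,
        chain'_take_iff]
      intro m h1 h2
      rcases Nat.lt_or_ge (m+1) i with hc | hc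
      · exact chain'_take_iff.mp h.1 m hc h2
      · have hmi : m = i - 1 := by omega
        subst hmi
        simpa [hi1] using hlt
    · have := List.IsChain.tail h.2
      rwa [List.tail_drop] at this

lemma validW_filter (w : List Λ) (hw : w ≠ []) :
    ((Finset.range (w.length + 1)).filter (ValidW w)) = ∅ ∨
      ∃ j, ((Finset.range (w.length + 1)).filter (ValidW w)) = {j, j+1} := by
  rcases eq_or_ne ((Finset.range (w.length + 1)).filter (ValidW w)) ∅ with he | he
  · left; exact he
  right
  have hne : ((Finset.range (w.length + 1)).filter (ValidW w)).Nonempty :=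
    Finset.nonempty_iff_ne_empty.mpr he
  obtain ⟨j, hjmem, hjmin⟩ := Finset.exists_min_image _ id hne
  simp only [Finset.mem_filter, Finset.mem_range] at hjmem
  obtain ⟨hjr, hjv⟩ := hjmem
  have hjle : ∀ i, i ∈ (Finset.range (w.length + 1)).filter (ValidW w) → j ≤ i := by
    intro i hi; exact hjmin i hi
  have hlen : 1 ≤ w.length := List.length_pos_iff.mpr hw
  have hj1 : ValidW w (j+1) ∧ j + 1 ≤ w.length := by
    rcases Nat.eq_zero_or_pos j with hj0 | hj0
    · rw [hj0]
      exact ⟨validW_zero hw (hj0 ▸ hjv), hlen⟩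
    · have hjn : j < w.length := by
        rcases Nat.lt_or_ge j w.length with h | h
        · exact h
        · exfalso
          have hjeq : j = w.length := by omega
          have hv := validW_top (hjeq ▸ hjv)
          have := hjle (w.length - 1) (by
            rw [Finset.mem_filter, Finset.mem_range]
            exact ⟨by omega, hv⟩)
          omega
      rcases validW_mid hjv hj0 hjn with h | h
      · exfalso
        have := hjle (j - 1) (by
          rw [Finset.mem_filter, Finset.mem_range]
          exact ⟨by omega, h⟩)
        omega
      · exact ⟨h, by omega⟩
  refine ⟨j, ?_⟩
  ext i
  simp only [Finset.mem_filter, Finset.mem_range, Finset.mem_insert, Finset.mem_singleton]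
  constructor
  · rintro ⟨hir, hiv⟩
    have hji : j ≤ i := hjle i (Finset.mem_filter.mpr ⟨Finset.mem_range.mpr hir, hiv⟩)
    rcases eq_or_lt_of_le hji with h | h
    · left; omega
    · right; exact validW_succ_of_validW hjv hiv h (by omega)
  · rintro (rfl | rfl)
    · exact ⟨by omega, hjv⟩
    · exact ⟨by omega, hj1.1⟩

lemma sum_validW (w : List Λ) (hw : w ≠ []) :
    ∑ i ∈ Finset.range (w.length + 1), (if ValidW w i then ((-1 : ℤ)) ^ i else 0) = 0 := by
  rw [← Finset.sum_filter]
  rcases validW_filter w hw with h | ⟨j, h⟩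
  · rw [h]; simp
  · rw [h, Finset.sum_pair (by omega : j ≠ j + 1)]
    ring
end Valid

section LW
variable {P Λ : Type} (lab : P → P → Λ)

lemma lw_nil : labelWord lab ([] : List P) = [] := rfl
lemma lw_single (a : P) : labelWord lab [a] = [] := rfl
lemma lw_cons2 (a b : P) (t : List P) :
    labelWord lab (a :: b :: t) = lab a b :: labelWord lab (b :: t) := rfl

lemma lw_length (l : List P) : (labelWord lab l).length = l.length - 1 := by
  simp [labelWord]

lemma lw_take (l : List P) : ∀ i : ℕ, labelWord lab (l.take (i+1)) = (labelWord lab l).take i := by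
  induction l with
  | nil => intro i; simp [labelWord]
  | cons a t ih =>
    intro i
    cases t with
    | nil => simp [labelWord]
    | cons b t' =>
      cases i with
      | zero => simp [labelWord]
      | succ i =>
        have h1 : (a :: b :: t').take (i+1+1) = a :: ((b :: t').take (i+1)) := rfl
        have h2 : (b :: t').take (i+1) = b :: t'.take i := rfl
        rw [h1, h2, show labelWord lab (a :: b :: t'.take i) =
            lab a b :: labelWord lab (b :: t'.take i) from rfl, ← h2, ih,
          lw_cons2, List.take_cons]
        · simp
        · omega

lemma lw_drop (l : List P) : ∀ i : ℕ, labelWord lab (l.drop i) = (labelWord lab l).drop i := by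
  induction l with
  | nil => intro i; simp [labelWord]
  | cons a t ih =>
    intro i
    cases i with
    | zero => simp
    | succ i =>
      rw [show (a :: t).drop (i+1) = t.drop i from rfl, ih]
      cases t with
      | nil => simp [labelWord]
      | cons b t' => rw [lw_cons2, List.drop_succ_cons]
end LW

section ChainFacts
variable {P : Type} [PartialOrder P]

lemma satChainIn_rank (ρ : P → ℕ) (hρ : ∀ x y : P, x ⋖ y → ρ y = ρ x + 1) :
    ∀ (l : List P) (x z : P), SatChainIn x z l → ρ z + 1 = ρ x + l.length := by
  intro l
  induction l with
  | nil => intro x z h; exact absurd rfl h.1.1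
  | cons a t ih =>
    intro x z h
    obtain ⟨⟨hne, hch⟩, hh, hl⟩ := h
    have hax : a = x := by simpa using hh
    cases t with
    | nil =>
      have : a = z := by simpa using hl
      simp [hax ▸ this, hax]
    | cons b t' =>
      rw [List.Chain', List.isChain_cons_cons] at hch
      have hab : a ⋖ b := hch.1
      have := ih b z ⟨⟨by simp, hch.2⟩, rfl, by rwa [List.getLast?_cons_cons] at hl⟩
      subst hax
      rw [hρ a b hab] at this
      simp only [List.length_cons] at this ⊢
      omega

lemma le_of_satChainIn : ∀ (l : List P) (x z : P), SatChainIn x z l → x ≤ z := by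
  intro l
  induction l with
  | nil => intro x z h; exact absurd rfl h.1.1
  | cons a t ih =>
    intro x z h
    obtain ⟨⟨hne, hch⟩, hh, hl⟩ := h
    have hax : a = x := by simpa using hh
    cases t with
    | nil =>
      have : a = z := by simpa using hl
      exact le_of_eq (hax ▸ this ▸ rfl)
    | cons b t' =>
      rw [List.Chain', List.isChain_cons_cons] at hch
      have := ih b z ⟨⟨by simp, hch.2⟩, rfl, by rwa [List.getLast?_cons_cons] at hl⟩
      exact hax ▸ (hch.1.le.trans this)

lemma satChainIn_eq_of_len_one {l : List P} {x z : P} (h : SatChainIn x z l)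
    (hlen : l.length = 1) : x = z := by
  obtain ⟨a, rfl⟩ := List.length_eq_one_iff.mp hlen
  obtain ⟨_, hh, hl⟩ := h
  simp only [List.head?_cons, Option.some.injEq] at hh
  simp only [List.getLast?_singleton, Option.some.injEq] at hl
  rw [← hh, ← hl]

end ChainFacts

section ERFacts
variable {P Λ : Type} [PartialOrder P] [Fintype P] [OrderBot P] [PartialOrder Λ]
variable (lab : P → P → Λ)

lemma satChain_finite (S : Set (List P)) (hS : ∀ l ∈ S, l.Chain' (· ⋖ ·)) : S.Finite := by
  apply (List.finite_length_le P (Fintype.card P)).subset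
  intro l hl
  have h1 : l.Chain' (· < ·) := (hS l hl).imp fun _ _ h => h.lt
  have h2 : l.Pairwise (· < ·) := List.isChain_iff_pairwise.mp h1
  have h3 : l.Nodup := h2.imp ne_of_lt
  exact h3.length_le_card

variable (hER : IsER lab)

noncomputable def IC (z y : P) : List P :=
  if h : z ≤ y then (hER z y h).exists.choose else [z]

lemma IC_spec {z y : P} (h : z ≤ y) :
    SatChainIn z y (IC lab hER z y) ∧ IsIncreasing (labelWord lab (IC lab hER z y)) := by
  rw [IC, dif_pos h]
  exact (hER z y h).exists.choose_spec

lemma IC_unique {z y : P} (h : z ≤ y) {l : List P} (h1 : SatChainIn z y l)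
    (h2 : IsIncreasing (labelWord lab l)) : l = IC lab hER z y :=
  (hER z y h).unique ⟨h1, h2⟩ (IC_spec lab hER h)

lemma IC_cons {z y : P} (h : z ≤ y) : IC lab hER z y = z :: (IC lab hER z y).tail :=
  (List.cons_head?_tail (IC_spec lab hER h).1.2.1).symm

noncomputable def glue (y : P) (c : List P) : List P :=
  c ++ (IC lab hER (c.getLastD ⊥) y).tail

lemma glue_spec {c : List P} {z y : P} (hc : SatChainIn ⊥ z c) (hzy : z ≤ y) :
    SatChainIn ⊥ y (glue lab hER y c) ∧
    (glue lab hER y c).take c.length = c ∧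
    (glue lab hER y c).drop (c.length - 1) = IC lab hER z y := by
  have hlast : c.getLastD ⊥ = z := by
    rw [List.getLastD_eq_getLast?, hc.2.2]; rfl
  have hIC := IC_spec lab hER hzy
  have hICc := IC_cons lab hER hzy
  set t := (IC lab hER z y).tail with ht
  have hglue : glue lab hER y c = c ++ t := by rw [glue, hlast]
  have hcne : c ≠ [] := hc.1.1
  refine ⟨⟨⟨by simp [hglue, hcne], ?_⟩, ?_, ?_⟩, ?_, ?_⟩
  · rw [hglue]
    refine List.IsChain.append hc.1.2 ?_ ?_
    · have h2 := hIC.1.1.2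
      rw [hICc] at h2
      exact h2.tail
    · intro a ha b hb
      rw [hc.2.2] at ha
      have haz : z = a := by simpa using ha
      have h2 := hIC.1.1.2
      rw [hICc, List.Chain', List.isChain_cons] at h2
      exact haz ▸ h2.1 b hb
  · rw [hglue, List.head?_append]
    rw [hc.2.1]
    rfl
  · rw [hglue, List.getLast?_append]
    cases ht' : t with
    | nil =>
      have hzy' : z = y := by
        have h2 := hIC.1.2.2
        rw [hICc, ht'] at h2
        simpa using h2
      simp [hc.2.2, hzy']
    | cons b t' =>
      have h2 : (b :: t').getLast? = some y := by
        have h3 := hIC.1.2.2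
        rw [hICc, ht', List.getLast?_cons_cons] at h3
        exact h3
      simp [h2]
  · rw [hglue, List.take_left]
  · rw [hglue, List.drop_append]
    have hlen : 1 ≤ c.length := List.length_pos_iff.mpr hcne
    have h1 : c.length - 1 - c.length = 0 := by omega
    rw [h1, List.drop_zero]
    have hidx : c.length - 1 < c.length := by omega
    have hd : c.drop (c.length - 1) = [z] := by
      have hsucc : c.length - 1 + 1 = c.length := by omega
      rw [List.drop_eq_getElem_cons hidx, hsucc, List.drop_length]
      have h2 : c.getLast? = some z := hc.2.2
      rw [List.getLast?_eq_getElem?, List.getElem?_eq_getElem hidx] at h2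
      rw [Option.some.inj h2]
    rw [hd, hICc]
    rfl

lemma take_spec {d : List P} {y : P} (hd : SatChainIn ⊥ y d) {i : ℕ} (hi : i < d.length) :
    SatChainIn ⊥ (d[i]'hi) (d.take (i+1)) := by
  refine ⟨⟨?_, List.IsChain.take hd.1.2 _⟩, ?_, ?_⟩
  · apply List.ne_nil_of_length_pos
    rw [List.length_take]; omega
  · cases d with
    | nil => simp at hi
    | cons a td =>
      rw [show (a :: td).take (i+1) = a :: td.take i from rfl]
      simpa using hd.2.1
  · rw [List.getLast?_eq_getElem?, List.length_take]
    have hmin : min (i+1) d.length = i + 1 := by omega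
    rw [hmin]
    simp only [Nat.add_sub_cancel]
    rw [List.getElem?_take_of_lt (by omega : i < i + 1)]
    exact List.getElem?_eq_getElem hi

lemma drop_spec {d : List P} {y : P} (hd : SatChainIn ⊥ y d) {i : ℕ} (hi : i < d.length) :
    SatChainIn (d[i]'hi) y (d.drop i) := by
  refine ⟨⟨?_, List.IsChain.drop hd.1.2 _⟩, ?_, ?_⟩
  · apply List.ne_nil_of_length_pos
    rw [List.length_drop]; omega
  · rw [List.head?_drop]
    exact List.getElem?_eq_getElem hi
  · rw [List.getLast?_eq_getElem?, List.length_drop, List.getElem?_drop]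
    have h1 : i + (d.length - i - 1) = d.length - 1 := by omega
    rw [h1, ← List.getLast?_eq_getElem?]
    exact hd.2.2

end ERFacts

section KP
variable {P Λ : Type} [PartialOrder P] [Fintype P] [OrderBot P] [PartialOrder Λ]
variable (lab : P → P → Λ)

noncomputable def Dnum (z : P) : ℕ :=
  {l : List P | SatChainIn ⊥ z l ∧ IsAscentFree (labelWord lab l)}.ncard

variable (hER : IsER lab) (ρ : P → ℕ)

lemma rank_from_bot (hρ0 : ρ (⊥ : P) = 0) (hρ : ∀ x y : P, x ⋖ y → ρ y = ρ x + 1)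
    {z : P} {c : List P} (hc : SatChainIn ⊥ z c) : ρ z + 1 = c.length := by
  have := satChainIn_rank ρ hρ c ⊥ z hc
  omega

include hER in
lemma KP (hρ0 : ρ (⊥ : P) = 0) (hρ : ∀ x y : P, x ⋖ y → ρ y = ρ x + 1)
    {y : P} (hy : (⊥ : P) < y) :
    ∑ z ∈ Finset.univ.filter (· ≤ y), ((-1 : ℤ)) ^ (ρ z) * (Dnum lab z : ℤ) = 0 := by
  classical
  have hAFfin : ∀ z : P,
      ({l : List P | SatChainIn ⊥ z l ∧ IsAscentFree (labelWord lab l)}).Finite :=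
    fun z => satChain_finite _ (fun l hl => hl.1.1.2)
  have hMCfin : ({d : List P | SatChainIn ⊥ y d}).Finite :=
    satChain_finite _ (fun l hl => hl.1.2)
  have hstep : ∀ z : P, ((-1 : ℤ)) ^ (ρ z) * (Dnum lab z : ℤ)
      = ∑ _c ∈ (hAFfin z).toFinset, ((-1 : ℤ)) ^ (ρ z) := by
    intro z
    rw [Finset.sum_const, nsmul_eq_mul, Dnum, Set.ncard_eq_toFinset_card _ (hAFfin z), mul_comm]
  rw [Finset.sum_congr rfl (fun z _ => hstep z), Finset.sum_sigma']
  have hmain : ∑ x ∈ (Finset.univ.filter (· ≤ y)).sigma (fun z => (hAFfin z).toFinset),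
        ((-1 : ℤ)) ^ (ρ x.1)
      = ∑ q ∈ hMCfin.toFinset.sigma
          (fun d => (Finset.range d.length).filter (ValidW (labelWord lab d))),
        ((-1 : ℤ)) ^ q.2 := by
    refine Finset.sum_nbij' (fun p => ⟨glue lab hER y p.2, p.2.length - 1⟩)
      (fun q => ⟨q.1.getD q.2 ⊥, q.1.take (q.2 + 1)⟩) ?_ ?_ ?_ ?_ ?_
    · -- maps into B
      rintro ⟨z, c⟩ hp
      simp only [Finset.mem_sigma, Finset.mem_filter, Finset.mem_univ, true_and,
        Set.Finite.mem_toFinset, Set.mem_setOf_eq, Finset.mem_range] at hp ⊢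
      obtain ⟨hzy, hc, hAF⟩ := hp
      obtain ⟨hgl, htake, hdrop⟩ := glue_spec lab hER hc hzy
      have hcne : c ≠ [] := hc.1.1
      have hclen : 1 ≤ c.length := List.length_pos_iff.mpr hcne
      have hdlen : c.length ≤ (glue lab hER y c).length := by
        have := congrArg List.length htake
        rw [List.length_take] at this
        omega
      refine ⟨hgl, by omega, ?_, ?_⟩
      · rw [← lw_take lab _ (c.length - 1), show c.length - 1 + 1 = c.length from by omega, htake]
        exact hAF
      · rw [← lw_drop, hdrop]
        exact (IC_spec lab hER hzy).2
    · -- maps back into A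
      rintro ⟨d, i⟩ hq
      simp only [Finset.mem_sigma, Finset.mem_filter, Finset.mem_univ, true_and,
        Set.Finite.mem_toFinset, Set.mem_setOf_eq, Finset.mem_range] at hq ⊢
      obtain ⟨hd, hi, hAFt, hInct⟩ := hq
      have hgetD : d.getD i ⊥ = d[i]'hi := List.getD_eq_getElem d ⊥ hi
      refine ⟨?_, ?_, ?_⟩
      · rw [hgetD]
        exact le_of_satChainIn _ _ _ (drop_spec hd hi)
      · rw [hgetD]
        exact take_spec hd hi
      · rw [lw_take lab d i]
        exact hAFt
    · -- left inverse
      rintro ⟨z, c⟩ hp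
      simp only [Finset.mem_sigma, Finset.mem_filter, Finset.mem_univ, true_and,
        Set.Finite.mem_toFinset, Set.mem_setOf_eq] at hp
      obtain ⟨hzy, hc, hAF⟩ := hp
      obtain ⟨hgl, htake, hdrop⟩ := glue_spec lab hER hc hzy
      have hcne : c ≠ [] := hc.1.1
      have hclen : 1 ≤ c.length := List.length_pos_iff.mpr hcne
      have e1 : c.length - 1 + 1 = c.length := by omega
      have h1 : (glue lab hER y c)[(c.length - 1)]? = some z := by
        rw [← List.head?_drop, hdrop]
        exact (IC_spec lab hER hzy).1.2.1
      have h2 : (glue lab hER y c).getD (c.length - 1) ⊥ = z := by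
        rw [List.getD_eq_getElem?_getD, h1]
        rfl
      have h3 : (glue lab hER y c).take (c.length - 1 + 1) = c := by
        rw [e1]; exact htake
      simp only [h2, h3]
    · -- right inverse
      rintro ⟨d, i⟩ hq
      simp only [Finset.mem_sigma, Finset.mem_filter, Finset.mem_univ, true_and,
        Set.Finite.mem_toFinset, Set.mem_setOf_eq, Finset.mem_range] at hq
      obtain ⟨hd, hi, hAFt, hInct⟩ := hq
      have hgetD : d.getD i ⊥ = d[i]'hi := List.getD_eq_getElem d ⊥ hi
      have hds := drop_spec hd hi
      have hzy : d[i]'hi ≤ y := le_of_satChainIn _ _ _ hds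
      have hICeq : d.drop i = IC lab hER (d[i]'hi) y := by
        refine IC_unique lab hER hzy hds ?_
        rw [lw_drop]
        exact hInct
      have hlen : (d.take (i + 1)).length = i + 1 := by
        rw [List.length_take]; omega
      have hL : (d.take (i + 1)).getLastD ⊥ = d[i]'hi := by
        rw [List.getLastD_eq_getLast?, (take_spec hd hi).2.2]
        rfl
      have hg : glue lab hER y (d.take (i + 1)) = d := by
        rw [glue, hL, ← hICeq, List.tail_drop, List.take_append_drop]
      simp only [hgetD, hg, hlen, Nat.add_sub_cancel]
    · -- values agree
      rintro ⟨z, c⟩ hp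
      simp only [Finset.mem_sigma, Finset.mem_filter, Finset.mem_univ, true_and,
        Set.Finite.mem_toFinset, Set.mem_setOf_eq] at hp
      obtain ⟨hzy, hc, hAF⟩ := hp
      have := rank_from_bot ρ hρ0 hρ hc
      show ((-1 : ℤ)) ^ (ρ z) = ((-1 : ℤ)) ^ (c.length - 1)
      congr 1
      omega
  rw [hmain, Finset.sum_sigma]
  apply Finset.sum_eq_zero
  intro d hd
  rw [Set.Finite.mem_toFinset] at hd
  have hdne : d ≠ [] := hd.1.1
  have hrk := rank_from_bot ρ hρ0 hρ hd
  have hρy : 1 ≤ ρ y := by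
    rcases Nat.eq_zero_or_pos (ρ y) with h0 | h1
    · exfalso
      have hlen1 : d.length = 1 := by omega
      exact absurd (satChainIn_eq_of_len_one hd hlen1) (ne_of_lt hy)
    · exact h1
  have hw : (labelWord lab d).length = d.length - 1 := lw_length lab d
  have hwne : labelWord lab d ≠ [] := by
    apply List.ne_nil_of_length_pos
    omega
  have hrange : d.length = (labelWord lab d).length + 1 := by omega
  rw [hrange, Finset.sum_filter]
  exact sum_validW (labelWord lab d) hwne
end KP

section MobiusFacts
variable {P Λ : Type} [PartialOrder P] [Fintype P] [OrderBot P] [PartialOrder Λ]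
variable (lab : P → P → Λ) (hER : IsER lab) (ρ : P → ℕ)

include hER in
lemma rho_lt (hρ : ∀ x y : P, x ⋖ y → ρ y = ρ x + 1) {x z : P} (hxz : x < z) :
    ρ x < ρ z := by
  have h := (IC_spec lab hER hxz.le).1
  have hrk := satChainIn_rank ρ hρ _ _ _ h
  have hlen1 : 1 ≤ (IC lab hER x z).length := List.length_pos_iff.mpr h.1.1
  have hlen2 : (IC lab hER x z).length ≠ 1 := by
    intro h1
    exact absurd (satChainIn_eq_of_len_one h h1) (ne_of_lt hxz)
  omega

lemma Dnum_bot (hρ0 : ρ (⊥ : P) = 0) (hρ : ∀ x y : P, x ⋖ y → ρ y = ρ x + 1) :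
    Dnum lab (⊥ : P) = 1 := by
  rw [Dnum]
  have hset : {l : List P | SatChainIn ⊥ ⊥ l ∧ IsAscentFree (labelWord lab l)}
      = {[(⊥ : P)]} := by
    ext l
    simp only [Set.mem_setOf_eq, Set.mem_singleton_iff]
    constructor
    · rintro ⟨hl, -⟩
      have hlen := rank_from_bot ρ hρ0 hρ hl
      rw [hρ0] at hlen
      obtain ⟨a, rfl⟩ := List.length_eq_one_iff.mp (by omega : l.length = 1)
      have ha : a = ⊥ := by
        have := hl.2.1
        simpa using this
      rw [ha]
    · rintro rfl
      refine ⟨⟨⟨by simp, List.isChain_singleton _⟩, rfl, rfl⟩, ?_⟩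
      simp [labelWord, IsAscentFree]
      exact List.isChain_nil
  rw [hset, Set.ncard_singleton]

include hER in
lemma mob_eq (hρ0 : ρ (⊥ : P) = 0) (hρ : ∀ x y : P, x ⋖ y → ρ y = ρ x + 1) (y : P) :
    mobius (⊥ : P) y = ((-1 : ℤ)) ^ (ρ y) * (Dnum lab y : ℤ) := by
  suffices H : ∀ n : ℕ, ∀ y : P, ρ y < n →
      mobius (⊥ : P) y = ((-1 : ℤ)) ^ (ρ y) * (Dnum lab y : ℤ) from H (ρ y + 1) y (by omega)
  intro n
  induction n with
  | zero => intro y hy; omega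
  | succ n ih =>
    intro y hy
    rw [mobius]
    by_cases hb : (⊥ : P) = y
    · rw [if_pos hb]
      rw [← hb, hρ0, Dnum_bot lab ρ hρ0 hρ]
      simp
    · rw [if_neg hb]
      have hby : (⊥ : P) < y := lt_of_le_of_ne bot_le hb
      rw [Finset.sum_attach (Finset.univ.filter fun z : P => (⊥ : P) ≤ z ∧ z < y)
        (fun z => mobius (⊥ : P) z)]
      have hfeq : (Finset.univ.filter fun z : P => (⊥ : P) ≤ z ∧ z < y)
          = Finset.univ.filter (· < y) := by
        apply Finset.filter_congr
        intro z _
        simp [bot_le]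
      rw [hfeq]
      have hes : ∀ z ∈ Finset.univ.filter (· < y),
          mobius (⊥ : P) z = ((-1 : ℤ)) ^ (ρ z) * (Dnum lab z : ℤ) := by
        intro z hz
        rw [Finset.mem_filter] at hz
        have hρz : ρ z < ρ y := rho_lt lab hER ρ hρ hz.2
        exact ih z (by omega)
      rw [Finset.sum_congr rfl hes]
      have hKP := KP lab hER ρ hρ0 hρ hby
      have hsplit : (Finset.univ.filter (· ≤ y))
          = insert y (Finset.univ.filter (· < y)) := by
        ext z
        simp only [Finset.mem_filter, Finset.mem_univ, true_and, Finset.mem_insert]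
        constructor
        · intro h
          rcases eq_or_lt_of_le h with h | h
          · exact Or.inl h
          · exact Or.inr h
        · rintro (rfl | h)
          · exact le_refl _
          · exact h.le
      rw [hsplit, Finset.sum_insert (by simp)] at hKP
      linarith
end MobiusFacts

/-- **Proposition.** If `λ` is an ER-labeling of a finite graded poset `P`, then `|w_k(P)|`
is the number of ascent-free saturated chains of length `k` starting at `⊥`, and `W_k(P)`
is the number of strictly increasing saturated chains of length `k` starting at `⊥`. -/
theorem whitney_numbers_of_isER {P Λ : Type} [PartialOrder P] [Fintype P] [OrderBot P]
    [PartialOrder Λ] (ρ : P → ℕ) (hρ0 : ρ (⊥ : P) = 0)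
    (hρ : ∀ x y : P, x ⋖ y → ρ y = ρ x + 1)
    (lab : P → P → Λ) (hER : IsER lab) :
    ∀ k : ℕ,
      (whitney1 ρ (⊥ : P) k).natAbs =
        Nat.card {l : List P // IsSatChain l ∧ l.head? = some (⊥ : P) ∧
          l.length = k + 1 ∧ IsAscentFree (labelWord lab l)} ∧
      whitney2 ρ k =
        Nat.card {l : List P // IsSatChain l ∧ l.head? = some (⊥ : P) ∧
          l.length = k + 1 ∧ IsIncreasing (labelWord lab l)} := by
  
  intro k
  constructor
  · -- Whitney numbers of the first kind
    have hAFfin : ∀ z : P,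
        ({l : List P | SatChainIn ⊥ z l ∧ IsAscentFree (labelWord lab l)}).Finite :=
      fun z => satChain_finite _ (fun l hl => hl.1.1.2)
    have h1 : whitney1 ρ (⊥ : P) k
        = ((-1 : ℤ)) ^ k * ∑ x ∈ Finset.univ.filter (fun x : P => ρ x = k),
            (Dnum lab x : ℤ) := by
      rw [whitney1, Finset.mul_sum]
      apply Finset.sum_congr rfl
      intro x hx
      rw [Finset.mem_filter] at hx
      rw [mob_eq lab hER ρ hρ0 hρ x, hx.2]
    have hSfin : ({l : List P | IsSatChain l ∧ l.head? = some (⊥ : P) ∧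
        l.length = k + 1 ∧ IsAscentFree (labelWord lab l)}).Finite :=
      satChain_finite _ (fun l hl => hl.1.2)
    have h2 : Nat.card {l : List P // IsSatChain l ∧ l.head? = some (⊥ : P) ∧
          l.length = k + 1 ∧ IsAscentFree (labelWord lab l)}
        = ∑ x ∈ Finset.univ.filter (fun x : P => ρ x = k), Dnum lab x := by
      have hcard : Nat.card {l : List P // IsSatChain l ∧ l.head? = some (⊥ : P) ∧
            l.length = k + 1 ∧ IsAscentFree (labelWord lab l)}
          = hSfin.toFinset.card := by
        rw [← Set.ncard_eq_toFinset_card _ hSfin]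
        exact Nat.card_coe_set_eq _
      rw [hcard]
      have hbi : hSfin.toFinset
          = (Finset.univ.filter (fun x : P => ρ x = k)).biUnion
              (fun x => (hAFfin x).toFinset) := by
        ext l
        simp only [Set.Finite.mem_toFinset, Set.mem_setOf_eq, Finset.mem_biUnion,
          Finset.mem_filter, Finset.mem_univ, true_and]
        constructor
        · rintro ⟨hsat, hh, hlen, hAF⟩
          cases hgl : l.getLast? with
          | none => exact absurd (List.getLast?_eq_none_iff.mp hgl) hsat.1
          | some x =>
            have hsc : SatChainIn (⊥ : P) x l := ⟨hsat, hh, hgl⟩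
            have hrk := rank_from_bot ρ hρ0 hρ hsc
            exact ⟨x, by omega, hsc, hAF⟩
        · rintro ⟨x, hx, hsc, hAF⟩
          have hrk := rank_from_bot ρ hρ0 hρ hsc
          exact ⟨hsc.1, hsc.2.1, by omega, hAF⟩
      rw [hbi, Finset.card_biUnion]
      · apply Finset.sum_congr rfl
        intro x _
        rw [Dnum, Set.ncard_eq_toFinset_card _ (hAFfin x)]
      · intro x _ x' _ hne
        rw [Function.onFun, Finset.disjoint_left]
        intro l hl hl'
        rw [Set.Finite.mem_toFinset, Set.mem_setOf_eq] at hl hl'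
        apply hne
        have := hl.1.2.2
        rw [hl'.1.2.2] at this
        exact (Option.some.inj this).symm
    rw [h1, h2, Int.natAbs_mul, Int.natAbs_pow]
    simp only [Int.natAbs_neg, Int.natAbs_one, one_pow, one_mul]
    rw [← Nat.cast_sum, Int.natAbs_natCast]
  · -- Whitney numbers of the second kind
    have hTfin : ({l : List P | IsSatChain l ∧ l.head? = some (⊥ : P) ∧
        l.length = k + 1 ∧ IsIncreasing (labelWord lab l)}).Finite :=
      satChain_finite _ (fun l hl => hl.1.2)
    have hcard : Nat.card {l : List P // IsSatChain l ∧ l.head? = some (⊥ : P) ∧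
          l.length = k + 1 ∧ IsIncreasing (labelWord lab l)}
        = hTfin.toFinset.card := by
      rw [← Set.ncard_eq_toFinset_card _ hTfin]
      exact Nat.card_coe_set_eq _
    rw [hcard, whitney2]
    apply Finset.card_bij' (fun x _ => IC lab hER (⊥ : P) x)
      (fun l _ => l.getLastD (⊥ : P))
    · intro x hx
      rw [Finset.mem_filter] at hx
      have hsp := IC_spec lab hER (bot_le : (⊥ : P) ≤ x)
      have hrk := rank_from_bot ρ hρ0 hρ hsp.1
      rw [Set.Finite.mem_toFinset, Set.mem_setOf_eq]
      exact ⟨hsp.1.1, hsp.1.2.1, by omega, hsp.2⟩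
    · intro l hl
      rw [Set.Finite.mem_toFinset, Set.mem_setOf_eq] at hl
      obtain ⟨hsat, hh, hlen, hInc⟩ := hl
      cases hgl : l.getLast? with
      | none => exact absurd (List.getLast?_eq_none_iff.mp hgl) hsat.1
      | some x =>
        have hsc : SatChainIn (⊥ : P) x l := ⟨hsat, hh, hgl⟩
        have hrk := rank_from_bot ρ hρ0 hρ hsc
        rw [Finset.mem_filter]
        refine ⟨Finset.mem_univ _, ?_⟩
        rw [List.getLastD_eq_getLast?, hgl]
        show ρ x = k
        omega
    · intro x hx
      rw [List.getLastD_eq_getLast?, (IC_spec lab hER (bot_le : (⊥ : P) ≤ x)).1.2.2]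
      rfl
    · intro l hl
      rw [Set.Finite.mem_toFinset, Set.mem_setOf_eq] at hl
      obtain ⟨hsat, hh, hlen, hInc⟩ := hl
      cases hgl : l.getLast? with
      | none => exact absurd (List.getLast?_eq_none_iff.mp hgl) hsat.1
      | some x =>
        have hsc : SatChainIn (⊥ : P) x l := ⟨hsat, hh, hgl⟩
        rw [List.getLastD_eq_getLast?, hgl]
        exact (IC_unique lab hER bot_le hsc hInc).symm
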